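/- Let F be a field of characteristic zero, let d be an odd natural number, let n ≥ 2, and let A : (Fin d → Fin n) → F be a d-hypercubic of dimension n. Then the combinatorial hyperdeterminant of A vanishes identically: cdet(A) = 0. -/
import Mathlib


open Finset

/-- The combinatorial hyperdeterminant of a `d`-hypercubic of dimension `n`:
`cdet A = (1/n!) Σ_{σ₁,…,σ_d ∈ S_n} (∏ⱼ sgn σⱼ)(∏ᵢ A(σ₁(i),…,σ_d(i)))`. -/
noncomputable def cdet {F : Type*} [Field F] {n d : ℕ} (A : (Fin d → Fin n) → F) : F :=
  (Nat.factorial n : F)⁻¹ *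
    ∑ σ : Fin d → Equiv.Perm (Fin n),
      (∏ j, ((Equiv.Perm.sign (σ j) : ℤ) : F)) * ∏ i, A fun j => σ j i

/-- For an odd order `d` and dimension `n ≥ 2`, the combinatorial
hyperdeterminant of a `d`-hypercubic vanishes identically: `cdet A = 0`. -/
theorem cdet_eq_zero_of_odd {F : Type*} [Field F] [CharZero F] {n d : ℕ}
    (hn : 2 ≤ n) (hd : Odd d) (A : (Fin d → Fin n) → F) :
    cdet A = 0 := by
  have hne : (⟨0, by omega⟩ : Fin n) ≠ ⟨1, by omega⟩ := by
    simp [Fin.ext_iff]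
  set τ : Equiv.Perm (Fin n) := Equiv.swap ⟨0, by omega⟩ ⟨1, by omega⟩ with hτ
  set S : F := ∑ σ : Fin d → Equiv.Perm (Fin n),
      (∏ j, ((Equiv.Perm.sign (σ j) : ℤ) : F)) * ∏ i, A fun j => σ j i with hS
  have key : S = -S := by
    let e : (Fin d → Equiv.Perm (Fin n)) ≃ (Fin d → Equiv.Perm (Fin n)) :=
      Equiv.piCongrRight fun _ => Equiv.mulRight τ
    calc S = ∑ σ : Fin d → Equiv.Perm (Fin n),
        (∏ j, ((Equiv.Perm.sign (e σ j) : ℤ) : F)) * ∏ i, A fun j => (e σ) j i := by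
          rw [hS]
          exact (Equiv.sum_comp e fun σ =>
            (∏ j, ((Equiv.Perm.sign (σ j) : ℤ) : F)) * ∏ i, A fun j => σ j i).symm
      _ = ∑ σ : Fin d → Equiv.Perm (Fin n),
        (-1) * ((∏ j, ((Equiv.Perm.sign (σ j) : ℤ) : F)) * ∏ i, A fun j => σ j i) := by
          refine Finset.sum_congr rfl fun σ _ => ?_
          have hsign : ∀ j, ((Equiv.Perm.sign (e σ j) : ℤ) : F)
              = (-1) * ((Equiv.Perm.sign (σ j) : ℤ) : F) := by
            intro j
            have : e σ j = σ j * τ := rfl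
            rw [this, map_mul]
            simp [hτ, Equiv.Perm.sign_swap hne]
          have h1 : (∏ j, ((Equiv.Perm.sign (e σ j) : ℤ) : F))
              = (-1 : F) ^ d * ∏ j, ((Equiv.Perm.sign (σ j) : ℤ) : F) := by
            simp_rw [hsign]
            rw [Finset.prod_mul_distrib]
            simp
          have h2 : (∏ i, A fun j => (e σ) j i) = ∏ i, A fun j => σ j i := by
            have : ∀ i, (fun j => (e σ) j i) = fun j => σ j (τ i) := fun i => rfl
            simp_rw [this]
            exact Equiv.prod_comp τ fun i => A fun j => σ j i
          rw [h1, h2, hd.neg_one_pow]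
          ring
      _ = -S := by
          rw [hS, ← Finset.sum_neg_distrib]
          exact Finset.sum_congr rfl fun σ _ => by ring
  have hS0 : S = 0 := by
    have h2 : (2 : F) * S = 0 := by linear_combination key
    exact (mul_eq_zero.mp h2).resolve_left two_ne_zero
  rw [cdet, ← hS, hS0, mul_zero]
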